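/- arXiv:1305.0089 — 2 statements merged into one kernel-verified Lean document; each statement's English description precedes it below -/
import Mathlib

section
/- (Corollary, interior midpoint exactness for quadratics) Let u(x) = a x² + b x + c with a, b, c ∈ ℝ. Then for every interior index 1 ≤ i ≤ n−1, the recovered gradient value satisfies g_i = u'(x̃_i), where x̃_i = (x_{i−1} + x_{i+1})/2. -/
open intervalIntegral
open MeasureTheory

/-- The standard hat (piecewise linear nodal) basis function `φ_i` associated with the
partition `x 0 < x 1 < ... < x n`.  The branch on `[x_{i-1}, x_i]` is omitted when `i = 0`
and the branch on `[x_i, x_{i+1}]` is omitted when `i = n`. -/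
noncomputable def hatFn (x : ℕ → ℝ) (n i : ℕ) : ℝ → ℝ := fun t =>
  if 0 < i ∧ x (i-1) ≤ t ∧ t ≤ x i then (t - x (i-1)) / (x i - x (i-1))
  else if i < n ∧ x i ≤ t ∧ t ≤ x (i+1) then (x (i+1) - t) / (x (i+1) - x i)
  else 0

/-- The biorthogonal basis function `λ_i`. -/
noncomputable def biorthFn (x : ℕ → ℝ) (n i : ℕ) : ℝ → ℝ := fun t =>
  if 0 < i ∧ x (i-1) ≤ t ∧ t < x i then (2*(t - x (i-1)) + (t - x i)) / (x i - x (i-1))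
  else if i < n ∧ x i ≤ t ∧ t < x (i+1) then (2*(t - x (i+1)) + (t - x i)) / (x i - x (i+1))
  else 0

/-- The piecewise derivative `u_h'` of the interpolant `u_h = Σ_j u(x_j) φ_j`:
on each open subinterval `(x_j, x_{j+1})` it is the constant
`(u(x_{j+1}) - u(x_j)) / (x_{j+1} - x_j)`, and it is (arbitrarily) `0` at grid points and
outside `[x 0, x n]`. -/
noncomputable def interpDeriv (x : ℕ → ℝ) (n : ℕ) (u : ℝ → ℝ) : ℝ → ℝ := fun t =>
  ∑ j ∈ Finset.range n,
    if x j < t ∧ t < x (j+1) then (u (x (j+1)) - u (x j)) / (x (j+1) - x j) else 0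

/-- The recovered gradient value
`g_i = (∫_α^β u_h' λ_i dx) / (∫_α^β φ_i λ_i dx)` with `α = x 0`, `β = x n`. -/
noncomputable def recGrad (x : ℕ → ℝ) (n : ℕ) (u : ℝ → ℝ) (i : ℕ) : ℝ :=
  (∫ t in (x 0)..(x n), interpDeriv x n u t * biorthFn x n i t) /
  (∫ t in (x 0)..(x n), hatFn x n i t * biorthFn x n i t)

private lemma ae_ne_point (q : ℝ) : ∀ᵐ t : ℝ, t ≠ q := by
  rw [MeasureTheory.ae_iff]
  have : {t : ℝ | ¬ t ≠ q} = {q} := by ext t; simp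
  rw [this]
  exact Real.volume_singleton

private lemma ioo_integral_congr {f g : ℝ → ℝ} {p q : ℝ} (hpq : p ≤ q)
    (h : ∀ t ∈ Set.Ioo p q, f t = g t) :
    ∫ t in p..q, f t = ∫ t in p..q, g t := by
  apply intervalIntegral.integral_congr_ae
  filter_upwards [ae_ne_point q] with t ht htm
  rw [Set.uIoc_of_le hpq] at htm
  exact h t ⟨htm.1, lt_of_le_of_ne htm.2 ht⟩

private lemma ioo_integrable {f g : ℝ → ℝ} {p q : ℝ} (hpq : p ≤ q)
    (h : ∀ t ∈ Set.Ioo p q, f t = g t) (hg : Continuous g) :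
    IntervalIntegrable f volume p q := by
  apply (hg.intervalIntegrable p q).congr_ae
  have h2 : ∀ᵐ t ∂(volume.restrict (Set.uIoc p q)), t ≠ q :=
    (ae_ne_point q).filter_mono (MeasureTheory.ae_mono Measure.restrict_le_self)
  filter_upwards [h2, MeasureTheory.ae_restrict_mem measurableSet_uIoc] with t ht htm
  rw [Set.uIoc_of_le hpq] at htm
  exact (h t ⟨htm.1, lt_of_le_of_ne htm.2 ht⟩).symm

private lemma integral_linear (A B p q : ℝ) :
    ∫ t in p..q, (A * t + B) = A * (q^2 - p^2) / 2 + B * (q - p) := by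
  rw [intervalIntegral.integral_add (f := fun t => A * t) (g := fun _ => B) ((continuous_const.mul (continuous_id')).intervalIntegrable p q)
      (continuous_const.intervalIntegrable p q),
    intervalIntegral.integral_const_mul, integral_id, intervalIntegral.integral_const,
    smul_eq_mul]
  ring

private lemma integral_quadratic (A B C p q : ℝ) :
    ∫ t in p..q, (A * t^2 + (B * t + C))
      = A * (q^3 - p^3) / 3 + (B * (q^2 - p^2) / 2 + C * (q - p)) := by
  have h1 : IntervalIntegrable (fun t : ℝ => A * t^2) volume p q :=
    (continuous_const.mul (continuous_pow 2)).intervalIntegrable p q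
  have h2 : IntervalIntegrable (fun t : ℝ => B * t + C) volume p q :=
    ((continuous_const.mul continuous_id).add continuous_const).intervalIntegrable p q
  rw [intervalIntegral.integral_add h1 h2,
    intervalIntegral.integral_const_mul, integral_pow, integral_linear]
  norm_num
  ring

/-- interior midpoint exactness for quadratics: for `u(x) = a x² + b x + c`
and every interior index `1 ≤ i ≤ n-1`, `g_i = u'(x̃_i)` where
`x̃_i = (x_{i-1} + x_{i+1})/2` (and `u'(t) = 2 a t + b`). -/
theorem recGrad_quadratic_midpoint_interior (n : ℕ) (x : ℕ → ℝ) (hn : 2 ≤ n)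
    (hx : ∀ i < n, x i < x (i+1)) (a b c : ℝ) :
    ∀ i : ℕ, 1 ≤ i → i < n →
      recGrad x n (fun t => a * t^2 + b * t + c) i
        = 2 * a * ((x (i-1) + x (i+1)) / 2) + b := by
  intro i h1 hin
  set u : ℝ → ℝ := fun t => a * t^2 + b * t + c with hu
  have hmono : ∀ j k, j ≤ k → k ≤ n → x j ≤ x k := by
    intro j k hjk hkn
    obtain ⟨d, rfl⟩ := Nat.exists_eq_add_of_le hjk
    clear hjk
    induction d with
    | zero => simp
    | succ m ih =>
      have : x j ≤ x (j + m) := ih (by omega)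
      have h2 : x (j + m) < x (j + m + 1) := hx _ (by omega)
      have : x j < x (j + (m+1)) := lt_of_le_of_lt this (by rw [← Nat.add_assoc]; exact h2)
      linarith
  have hi1 : i - 1 + 1 = i := Nat.succ_pred_eq_of_pos h1
  set p := x (i-1) with hp
  set q := x i with hq
  set r := x (i+1) with hr
  have hpq : p < q := by
    have := hx (i-1) (by omega); rwa [hi1] at this
  have hqr : q < r := hx i hin
  have hqp : q - p ≠ 0 := by linarith
  have hrq : q - r ≠ 0 := by linarith
  -- evaluation of interpDeriv on open subintervals
  have hID : ∀ j < n, ∀ t ∈ Set.Ioo (x j) (x (j+1)),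
      interpDeriv x n u t = (u (x (j+1)) - u (x j)) / (x (j+1) - x j) := by
    intro j hj t ht
    unfold interpDeriv
    rw [Finset.sum_eq_single j]
    · rw [if_pos ⟨ht.1, ht.2⟩]
    · intro k hk hkj
      rw [if_neg]
      rintro ⟨hk1, hk2⟩
      rcases lt_or_gt_of_ne hkj with hlt | hgt
      · have : x (k+1) ≤ x j := hmono (k+1) j hlt (le_of_lt hj)
        exact absurd hk2 (not_lt.2 (le_trans this ht.1.le))
      · have : x (j+1) ≤ x k := hmono (j+1) k hgt (le_of_lt (Finset.mem_range.mp hk))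
        exact absurd hk1 (not_lt.2 (le_trans ht.2.le this))
    · intro hj'; exact absurd (Finset.mem_range.mpr hj) hj'
  -- biorthFn on the two adjacent intervals, zero elsewhere
  have hB1 : ∀ t ∈ Set.Ioo p q, biorthFn x n i t = (2*(t - p) + (t - q)) / (q - p) := by
    intro t ht
    unfold biorthFn
    rw [if_pos ⟨h1, ht.1.le, ht.2⟩]
  have hB2 : ∀ t ∈ Set.Ioo q r, biorthFn x n i t = (2*(t - r) + (t - q)) / (q - r) := by
    intro t ht
    unfold biorthFn
    rw [if_neg, if_pos ⟨hin, ht.1.le, ht.2⟩]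
    rintro ⟨-, -, h3⟩
    exact absurd h3 (not_lt.2 ht.1.le)
  have hB0 : ∀ j < n, j ≠ i - 1 → j ≠ i → ∀ t ∈ Set.Ioo (x j) (x (j+1)),
      biorthFn x n i t = 0 := by
    intro j hj hj1 hj2 t ht
    unfold biorthFn
    rcases lt_or_gt_of_ne hj1 with hlt | hgt
    · -- j < i - 1 : t < x (j+1) ≤ x (i-1) = p ≤ q
      have h3 : x (j+1) ≤ p := hmono (j+1) (i-1) (by omega) (by omega)
      have h4 : t < p := lt_of_lt_of_le ht.2 h3
      rw [if_neg, if_neg]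
      · rintro ⟨-, h5, -⟩; exact absurd h5 (not_le.2 (lt_of_lt_of_le h4 (by linarith)))
      · rintro ⟨-, h5, -⟩; exact absurd h5 (not_le.2 h4)
    · -- j > i - 1, j ≠ i, so j ≥ i+1 : r = x (i+1) ≤ x j < t
      have h3 : r ≤ x j := hmono (i+1) j (by omega) (le_of_lt hj)
      have h4 : r < t := lt_of_le_of_lt h3 ht.1
      rw [if_neg, if_neg]
      · rintro ⟨-, -, h5⟩; exact absurd h5 (not_lt.2 (by linarith))
      · rintro ⟨-, -, h5⟩; exact absurd h5 (not_lt.2 (by linarith))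
  -- hatFn on the two adjacent intervals
  have hH1 : ∀ t ∈ Set.Ioo p q, hatFn x n i t = (t - p) / (q - p) := by
    intro t ht
    unfold hatFn
    rw [if_pos ⟨h1, ht.1.le, ht.2.le⟩]
  have hH2 : ∀ t ∈ Set.Ioo q r, hatFn x n i t = (r - t) / (r - q) := by
    intro t ht
    unfold hatFn
    rw [if_neg, if_pos ⟨hin, ht.1.le, ht.2.le⟩]
    rintro ⟨-, -, h3⟩
    exact absurd h3 (not_le.2 ht.1)
  -- slopes
  set sP : ℝ := (u q - u p) / (q - p) with hsP
  set sQ : ℝ := (u r - u q) / (r - q) with hsQ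
  set fN : ℝ → ℝ := fun t => interpDeriv x n u t * biorthFn x n i t with hfN
  set fD : ℝ → ℝ := fun t => hatFn x n i t * biorthFn x n i t with hfD
  -- pointwise descriptions of fN and fD on each subinterval
  have hrq' : r - q ≠ 0 := by linarith
  have hNP : ∀ t ∈ Set.Ioo p q, fN t = (sP*3 * t + sP*(-(2*p+q))) / (q-p) := by
    intro t ht
    have e1 : interpDeriv x n u t = sP := by
      have := hID (i-1) (by omega) t (by rwa [hi1])
      rwa [hi1] at this
    rw [hfN]; simp only
    rw [e1, hB1 t ht, mul_div_assoc']
    ring_nf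
  have hNQ : ∀ t ∈ Set.Ioo q r, fN t = (sQ*3 * t + sQ*(-(2*r+q))) / (q-r) := by
    intro t ht
    have e1 : interpDeriv x n u t = sQ := hID i hin t ht
    rw [hfN]; simp only
    rw [e1, hB2 t ht, mul_div_assoc']
    ring_nf
  have hDP : ∀ t ∈ Set.Ioo p q, fD t
      = (3 * t^2 + ((-(5*p+q)) * t + (2*p^2+p*q))) / ((q-p)*(q-p)) := by
    intro t ht
    rw [hfD]; simp only
    rw [hH1 t ht, hB1 t ht, div_mul_div_comm,
      div_eq_div_iff (mul_ne_zero hqp hqp) (mul_ne_zero hqp hqp)]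
    ring
  have hDQ : ∀ t ∈ Set.Ioo q r, fD t
      = (3 * t^2 + ((-(5*r+q)) * t + (2*r^2+r*q))) / ((q-r)*(q-r)) := by
    intro t ht
    rw [hfD]; simp only
    rw [hH2 t ht, hB2 t ht, div_mul_div_comm,
      div_eq_div_iff (mul_ne_zero hrq' hrq) (mul_ne_zero hrq hrq)]
    ring
  have hN0 : ∀ j < n, j ≠ i - 1 → j ≠ i → ∀ t ∈ Set.Ioo (x j) (x (j+1)), fN t = 0 := by
    intro j hj hj1 hj2 t ht
    rw [hfN]; simp only
    rw [hB0 j hj hj1 hj2 t ht, mul_zero]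
  have hD0 : ∀ j < n, j ≠ i - 1 → j ≠ i → ∀ t ∈ Set.Ioo (x j) (x (j+1)), fD t = 0 := by
    intro j hj hj1 hj2 t ht
    rw [hfD]; simp only
    rw [hB0 j hj hj1 hj2 t ht, mul_zero]
  -- integrability of fN and fD on each subinterval
  have hle : ∀ j < n, x j ≤ x (j+1) := fun j hj => (hx j hj).le
  have hintN : ∀ j < n, IntervalIntegrable fN volume (x j) (x (j+1)) := by
    intro j hj
    by_cases hj1 : j = i - 1
    · subst hj1
      rw [hi1]
      exact ioo_integrable hpq.le (hNP) (by fun_prop)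
    by_cases hj2 : j = i
    · subst hj2
      exact ioo_integrable hqr.le (hNQ) (by fun_prop)
    · exact ioo_integrable (hle j hj) (hN0 j hj hj1 hj2) continuous_const
  have hintD : ∀ j < n, IntervalIntegrable fD volume (x j) (x (j+1)) := by
    intro j hj
    by_cases hj1 : j = i - 1
    · subst hj1
      rw [hi1]
      exact ioo_integrable hpq.le (hDP) (by fun_prop)
    by_cases hj2 : j = i
    · subst hj2
      exact ioo_integrable hqr.le (hDQ) (by fun_prop)
    · exact ioo_integrable (hle j hj) (hD0 j hj hj1 hj2) continuous_const
  -- sum decomposition helper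
  have hsub : ({i-1, i} : Finset ℕ) ⊆ Finset.range n := by
    intro j hj
    simp only [Finset.mem_insert, Finset.mem_singleton] at hj
    rcases hj with rfl | rfl <;> (apply Finset.mem_range.mpr; omega)
  have hne : (i - 1) ≠ i := by omega
  have split_sum : ∀ f : ℝ → ℝ, (∀ j < n, IntervalIntegrable f volume (x j) (x (j+1))) →
      (∀ j < n, j ≠ i - 1 → j ≠ i → ∀ t ∈ Set.Ioo (x j) (x (j+1)), f t = 0) →
      ∫ t in (x 0)..(x n), f t
        = (∫ t in p..q, f t) + ∫ t in q..r, f t := by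
    intro f hint h0
    rw [← intervalIntegral.sum_integral_adjacent_intervals hint]
    rw [← Finset.sum_subset hsub]
    · rw [Finset.sum_insert (by simp [hne]), Finset.sum_singleton, hi1]
    · intro j hj hj'
      simp only [Finset.mem_insert, Finset.mem_singleton, not_or] at hj'
      have hjn := Finset.mem_range.mp hj
      rw [ioo_integral_congr (hle j hjn) (h0 j hjn hj'.1 hj'.2)]
      simp
  -- compute numerator
  have hNval : ∫ t in (x 0)..(x n), fN t = sP * (q - p) / 2 + sQ * (r - q) / 2 := by
    rw [split_sum fN hintN hN0, ioo_integral_congr hpq.le hNP,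
      ioo_integral_congr hqr.le hNQ, intervalIntegral.integral_div,
      intervalIntegral.integral_div, integral_linear, integral_linear]
    field_simp
    ring
  have hDval : ∫ t in (x 0)..(x n), fD t = (r - p) / 2 := by
    rw [split_sum fD hintD hD0, ioo_integral_congr hpq.le hDP,
      ioo_integral_congr hqr.le hDQ, intervalIntegral.integral_div,
      intervalIntegral.integral_div, integral_quadratic, integral_quadratic]
    field_simp
    ring
  -- assemble
  have hrp : r - p ≠ 0 := by linarith
  rw [recGrad]
  rw [show (∫ t in (x 0)..(x n), interpDeriv x n (fun t => a * t^2 + b * t + c) t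
      * biorthFn x n i t) = ∫ t in (x 0)..(x n), fN t from rfl]
  rw [show (∫ t in (x 0)..(x n), hatFn x n i t * biorthFn x n i t)
      = ∫ t in (x 0)..(x n), fD t from rfl]
  rw [hNval, hDval]
  have hsP' : sP * (q - p) = a * (q^2 - p^2) + b * (q - p) := by
    rw [hsP, hu, div_mul_cancel₀ _ hqp]; ring
  have hsQ' : sQ * (r - q) = a * (r^2 - q^2) + b * (r - q) := by
    rw [hsQ, hu, div_mul_cancel₀ _ hrq']; ring
  rw [div_eq_iff (by positivity)]
  have : sP * (q - p) / 2 + sQ * (r - q) / 2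
      = (a * (r^2 - p^2) + b * (r - p)) / 2 := by
    rw [← add_div, hsP', hsQ']; ring
  rw [this]
  ring
end

section
/- (Corollary, midpoint error for cubics) Let u(x) = a x³ + b x² + c x + d with a, b, c, d ∈ ℝ, and let x̃_i = (x_{i−1} + x_{i+1})/2 for 1 ≤ i ≤ n−1, x̃_0 = (x_0 + x_1)/2, x̃_n = (x_{n−1} + x_n)/2. Then for every interior index 1 ≤ i ≤ n−1, |g_i − u'(x̃_i)| = (|a|/4) (x_{i+1} − x_{i−1})²; moreover |g_0 − u'(x̃_0)| = (|a|/4) (x_1 − x_0)² and |g_n − u'(x̃_n)| = (|a|/4) (x_n − x_{n−1})². -/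
open intervalIntegral

open MeasureTheory


lemma integral_quad (p q r A B : ℝ) :
    ∫ t in A..B, (p*t^2 + q*t + r) =
      (p*B^3/3 + q*B^2/2 + r*B) - (p*A^3/3 + q*A^2/2 + r*A) := by
  apply intervalIntegral.integral_eq_sub_of_hasDerivAt
  · intro t ht
    have h1 : HasDerivAt (fun s : ℝ => p*s^3/3 + q*s^2/2 + r*s)
        (p*((3:ℕ)*t^2)/3 + q*((2:ℕ)*t^1)/2 + r*1) t := by
      exact ((((hasDerivAt_pow 3 t).const_mul p).div_const 3).add
        (((hasDerivAt_pow 2 t).const_mul q).div_const 2)).add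
          ((hasDerivAt_id t).const_mul r)
    refine h1.congr_deriv ?_
    push_cast; ring
  · exact (by continuity : Continuous fun t : ℝ => p*t^2+q*t+r).intervalIntegrable A B

lemma piece_congr {A B : ℝ} (hAB : A ≤ B) {f g : ℝ → ℝ} (hg : Continuous g)
    (hfg : ∀ t ∈ Set.Ioo A B, f t = g t) :
    IntervalIntegrable f volume A B ∧ ∫ t in A..B, f t = ∫ t in A..B, g t := by
  have hsub : {t | ¬ (t ∈ Set.uIoc A B → f t = g t)} ⊆ {B} := by
    intro t ht
    simp only [Set.mem_setOf_eq, Classical.not_imp] at ht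
    obtain ⟨ht1, ht2⟩ := ht
    rw [Set.uIoc_of_le hAB] at ht1
    by_contra hB
    exact ht2 (hfg t ⟨ht1.1, lt_of_le_of_ne ht1.2 (by simpa using hB)⟩)
  have hae : ∀ᵐ t ∂(volume : Measure ℝ), t ∈ Set.uIoc A B → f t = g t :=
    MeasureTheory.ae_iff.mpr (measure_mono_null hsub (measure_singleton B))
  constructor
  · refine (hg.intervalIntegrable A B).congr_ae ?_
    exact ((ae_restrict_iff' measurableSet_uIoc).mpr (hae.mono fun t h ht => (h ht).symm))
  · exact intervalIntegral.integral_congr_ae hae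

lemma piece_eval {A B : ℝ} (hAB : A < B) {f : ℝ → ℝ} (p q r : ℝ)
    (hfg : ∀ t ∈ Set.Ioo A B, f t = p*t^2 + q*t + r) :
    IntervalIntegrable f volume A B ∧
      ∫ t in A..B, f t = (p*B^3/3+q*B^2/2+r*B) - (p*A^3/3+q*A^2/2+r*A) := by
  obtain ⟨h1, h2⟩ := piece_congr hAB.le (by continuity) hfg
  exact ⟨h1, h2.trans (integral_quad p q r A B)⟩

lemma piece_zero {A B : ℝ} (hAB : A < B) {f : ℝ → ℝ}
    (hf : ∀ t ∈ Set.Ioo A B, f t = 0) :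
    IntervalIntegrable f volume A B ∧ ∫ t in A..B, f t = 0 := by
  obtain ⟨h1, h2⟩ := piece_eval (f := f) hAB 0 0 0 (by intro t ht; rw [hf t ht]; ring)
  exact ⟨h1, by rw [h2]; ring⟩

lemma pieceN_left {A B D : ℝ} (hAB : A < B) {f : ℝ → ℝ}
    (hf : ∀ t ∈ Set.Ioo A B, f t = D * ((2*(t - A) + (t - B)) / (B - A))) :
    IntervalIntegrable f volume A B ∧ ∫ t in A..B, f t = D * (B - A) / 2 := by
  have hne : B - A ≠ 0 := sub_ne_zero.mpr hAB.ne'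
  obtain ⟨h1, h2⟩ := piece_eval (f := f) hAB 0 (3*D/(B-A)) (-(D*(2*A+B)/(B-A)))
    (by intro t ht; rw [hf t ht]; field_simp; ring)
  refine ⟨h1, h2.trans ?_⟩
  field_simp
  ring

lemma pieceN_right {B C D : ℝ} (hBC : B < C) {f : ℝ → ℝ}
    (hf : ∀ t ∈ Set.Ioo B C, f t = D * ((2*(t - C) + (t - B)) / (B - C))) :
    IntervalIntegrable f volume B C ∧ ∫ t in B..C, f t = D * (C - B) / 2 := by
  have hne : B - C ≠ 0 := sub_ne_zero.mpr hBC.ne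
  obtain ⟨h1, h2⟩ := piece_eval (f := f) hBC 0 (3*D/(B-C)) (-(D*(2*C+B)/(B-C)))
    (by intro t ht; rw [hf t ht]; field_simp; ring)
  refine ⟨h1, h2.trans ?_⟩
  field_simp
  ring

lemma pieceD_left {A B : ℝ} (hAB : A < B) {f : ℝ → ℝ}
    (hf : ∀ t ∈ Set.Ioo A B, f t =
      ((t - A)/(B - A)) * ((2*(t - A) + (t - B)) / (B - A))) :
    IntervalIntegrable f volume A B ∧ ∫ t in A..B, f t = (B - A) / 2 := by
  have hne : B - A ≠ 0 := sub_ne_zero.mpr hAB.ne'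
  obtain ⟨h1, h2⟩ := piece_eval (f := f) hAB (3/(B-A)^2) (-((5*A+B)/(B-A)^2)) (A*(2*A+B)/(B-A)^2)
    (by intro t ht; rw [hf t ht]; field_simp; ring)
  refine ⟨h1, h2.trans ?_⟩
  field_simp
  ring

lemma pieceD_right {B C : ℝ} (hBC : B < C) {f : ℝ → ℝ}
    (hf : ∀ t ∈ Set.Ioo B C, f t =
      ((C - t)/(C - B)) * ((2*(t - C) + (t - B)) / (B - C))) :
    IntervalIntegrable f volume B C ∧ ∫ t in B..C, f t = (C - B) / 2 := by
  have hne : C - B ≠ 0 := sub_ne_zero.mpr hBC.ne'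
  have hne' : B - C ≠ 0 := sub_ne_zero.mpr hBC.ne
  obtain ⟨h1, h2⟩ := piece_eval (f := f) hBC (3/(C-B)^2) (-((5*C+B)/(C-B)^2)) (C*(2*C+B)/(C-B)^2)
    (by intro t ht; rw [hf t ht]; field_simp; ring)
  refine ⟨h1, h2.trans ?_⟩
  field_simp
  ring

section pointwise

variable {n : ℕ} {x : ℕ → ℝ}

lemma xmono (hx : ∀ i < n, x i < x (i+1)) : ∀ p q, p ≤ q → q ≤ n → x p ≤ x q := by
  intro p q hpq hqn
  induction q with
  | zero => simp [Nat.le_zero.mp hpq]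
  | succ q ih =>
    rcases Nat.eq_or_lt_of_le hpq with h | h
    · rw [h]
    · exact le_trans (ih (by omega) (by omega)) (hx q (by omega)).le

lemma interp_on (hx : ∀ i < n, x i < x (i+1)) (u : ℝ → ℝ) (j : ℕ) (hj : j < n) :
    ∀ t ∈ Set.Ioo (x j) (x (j+1)),
      interpDeriv x n u t = (u (x (j+1)) - u (x j)) / (x (j+1) - x j) := by
  intro t ht
  unfold interpDeriv
  rw [Finset.sum_eq_single j]
  · rw [if_pos ⟨ht.1, ht.2⟩]
  · intro k hk hkj
    rw [Finset.mem_range] at hk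
    rw [if_neg]
    rintro ⟨h1, h2⟩
    rcases lt_or_gt_of_ne hkj with h | h
    · exact absurd (h2.trans_le (xmono hx (k+1) j (by omega) (by omega))) (not_lt.mpr ht.1.le)
    · exact absurd (h1.trans ht.2) (not_lt.mpr (xmono hx (j+1) k (by omega) (by omega)))
  · intro h; exact absurd (Finset.mem_range.mpr hj) h

lemma biorth_left (i : ℕ) (h1 : 1 ≤ i) :
    ∀ t ∈ Set.Ioo (x (i-1)) (x i),
      biorthFn x n i t = (2*(t - x (i-1)) + (t - x i)) / (x i - x (i-1)) := by
  intro t ht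
  unfold biorthFn
  rw [if_pos ⟨h1, ht.1.le, ht.2⟩]

lemma biorth_right (i : ℕ) (hi : i < n) :
    ∀ t ∈ Set.Ioo (x i) (x (i+1)),
      biorthFn x n i t = (2*(t - x (i+1)) + (t - x i)) / (x i - x (i+1)) := by
  intro t ht
  unfold biorthFn
  rw [if_neg (by rintro ⟨-, -, h⟩; exact lt_asymm ht.1 h),
    if_pos ⟨hi, ht.1.le, ht.2⟩]

lemma biorth_zero (hx : ∀ i < n, x i < x (i+1)) (i : ℕ) (hi : i ≤ n) (j : ℕ) (hj : j < n)
    (hji1 : 0 < i → j ≠ i - 1) (hji : j ≠ i) :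
    ∀ t ∈ Set.Ioo (x j) (x (j+1)), biorthFn x n i t = 0 := by
  intro t ht
  unfold biorthFn
  rw [if_neg, if_neg]
  · rintro ⟨h0, h1, h2⟩
    rcases lt_or_gt_of_ne hji with h | h
    · exact absurd h1 (not_le.mpr (ht.2.trans_le (xmono hx (j+1) i (by omega) hi)))
    · exact absurd h2 (not_lt.mpr ((xmono hx (i+1) j (by omega) (by omega)).trans ht.1.le))
  · rintro ⟨h0, h1, h2⟩
    have hji1' := hji1 h0
    rcases lt_or_gt_of_ne hji1' with h | h
    · exact absurd h1 (not_le.mpr (ht.2.trans_le (xmono hx (j+1) (i-1) (by omega) (by omega))))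
    · exact absurd h2 (not_lt.mpr ((xmono hx i j (by omega) (by omega)).trans ht.1.le))

lemma hat_left (i : ℕ) (h1 : 1 ≤ i) :
    ∀ t ∈ Set.Ioo (x (i-1)) (x i),
      hatFn x n i t = (t - x (i-1)) / (x i - x (i-1)) := by
  intro t ht
  unfold hatFn
  rw [if_pos ⟨h1, ht.1.le, ht.2.le⟩]

lemma hat_right (i : ℕ) (hi : i < n) :
    ∀ t ∈ Set.Ioo (x i) (x (i+1)),
      hatFn x n i t = (x (i+1) - t) / (x (i+1) - x i) := by
  intro t ht
  unfold hatFn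
  rw [if_neg (by rintro ⟨-, -, h⟩; exact absurd h (not_le.mpr ht.1)),
    if_pos ⟨hi, ht.1.le, ht.2.le⟩]

end pointwise

lemma recGrad_eq (n : ℕ) (x : ℕ → ℝ) (hn : 2 ≤ n) (hx : ∀ i < n, x i < x (i+1)) (u : ℝ → ℝ) :
    (∀ i, 1 ≤ i → i < n →
        recGrad x n u i = (u (x (i+1)) - u (x (i-1))) / (x (i+1) - x (i-1))) ∧
    recGrad x n u 0 = (u (x 1) - u (x 0)) / (x 1 - x 0) ∧
    recGrad x n u n = (u (x n) - u (x (n-1))) / (x n - x (n-1)) := by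
  refine ⟨?_, ?_, ?_⟩
  · -- interior
    intro i h1 h2
    obtain ⟨k, rfl⟩ : ∃ k, i = k + 1 := ⟨i - 1, by omega⟩
    have hAB : x k < x (k+1) := hx k (by omega)
    have hBC : x (k+1) < x (k+2) := hx (k+1) (by omega)
    have hneAB : x (k+1) - x k ≠ 0 := sub_ne_zero.mpr hAB.ne'
    have hneBC : x (k+2) - x (k+1) ≠ 0 := sub_ne_zero.mpr hBC.ne'
    have hNpiece : ∀ j ∈ Finset.range n,
        IntervalIntegrable (fun t => interpDeriv x n u t * biorthFn x n (k+1) t)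
          volume (x j) (x (j+1)) ∧
        (∫ t in (x j)..(x (j+1)), interpDeriv x n u t * biorthFn x n (k+1) t) =
          (if j = k then (u (x (k+1)) - u (x k))/2 else
           if j = k+1 then (u (x (k+2)) - u (x (k+1)))/2 else 0) := by
      intro j hj
      rw [Finset.mem_range] at hj
      rcases eq_or_ne j k with rfl | hk
      · rw [if_pos rfl]
        obtain ⟨hI, hv⟩ := pieceN_left (D := (u (x (j+1)) - u (x j))/(x (j+1) - x j)) hAB
          (f := fun t => interpDeriv x n u t * biorthFn x n (j+1) t)
          (by intro t ht; beta_reduce; beta_reduce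
              rw [interp_on hx u j (by omega) t ht, biorth_left (j+1) (by omega) t ht]; try norm_num)
        exact ⟨hI, hv.trans (by field_simp)⟩
      rcases eq_or_ne j (k+1) with rfl | hk1
      · rw [if_neg hk, if_pos rfl]
        obtain ⟨hI, hv⟩ := pieceN_right (D := (u (x (k+2)) - u (x (k+1)))/(x (k+2) - x (k+1))) hBC
          (f := fun t => interpDeriv x n u t * biorthFn x n (k+1) t)
          (by intro t ht; beta_reduce; beta_reduce
              rw [interp_on hx u (k+1) (by omega) t ht, biorth_right (k+1) (by omega) t ht]; try norm_num)
        exact ⟨hI, hv.trans (by field_simp)⟩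
      · rw [if_neg hk, if_neg hk1]
        exact piece_zero (hx j hj)
          (by intro t ht; beta_reduce; beta_reduce
              rw [biorth_zero hx (k+1) (by omega) j hj (fun _ => by omega) hk1 t ht, mul_zero])
    have hDpiece : ∀ j ∈ Finset.range n,
        IntervalIntegrable (fun t => hatFn x n (k+1) t * biorthFn x n (k+1) t)
          volume (x j) (x (j+1)) ∧
        (∫ t in (x j)..(x (j+1)), hatFn x n (k+1) t * biorthFn x n (k+1) t) =
          (if j = k then (x (k+1) - x k)/2 else
           if j = k+1 then (x (k+2) - x (k+1))/2 else 0) := by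
      intro j hj
      rw [Finset.mem_range] at hj
      rcases eq_or_ne j k with rfl | hk
      · rw [if_pos rfl]
        exact pieceD_left hAB
          (f := fun t => hatFn x n (j+1) t * biorthFn x n (j+1) t)
          (by intro t ht; beta_reduce; beta_reduce
              rw [hat_left (j+1) (by omega) t ht, biorth_left (j+1) (by omega) t ht]; try norm_num)
      rcases eq_or_ne j (k+1) with rfl | hk1
      · rw [if_neg hk, if_pos rfl]
        exact pieceD_right hBC
          (f := fun t => hatFn x n (k+1) t * biorthFn x n (k+1) t)
          (by intro t ht; beta_reduce; beta_reduce
              rw [hat_right (k+1) (by omega) t ht, biorth_right (k+1) (by omega) t ht]; try norm_num)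
      · rw [if_neg hk, if_neg hk1]
        exact piece_zero (hx j hj)
          (by intro t ht; beta_reduce; beta_reduce
              rw [biorth_zero hx (k+1) (by omega) j hj (fun _ => by omega) hk1 t ht, mul_zero])
    have hpair : ∀ (v1 v2 : ℝ),
        (∑ j ∈ Finset.range n, (if j = k then v1 else if j = k+1 then v2 else 0)) = v1 + v2 := by
      intro v1 v2
      have hsplit : ∀ j : ℕ, (if j = k then v1 else if j = k+1 then v2 else 0) =
          (if j = k then v1 else 0) + (if j = k+1 then v2 else 0) := by
        intro j
        rcases eq_or_ne j k with rfl | hj1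
        · simp only [if_pos rfl, if_neg (show ¬(j = j+1) by omega), add_zero]
        · simp only [if_neg hj1, zero_add]
      rw [Finset.sum_congr rfl (fun j _ => hsplit j)]
      rw [Finset.sum_add_distrib, Finset.sum_ite_eq' (Finset.range n) k (fun _ => v1),
        Finset.sum_ite_eq' (Finset.range n) (k+1) (fun _ => v2),
        if_pos (Finset.mem_range.mpr (by omega)), if_pos (Finset.mem_range.mpr (by omega))]
    have hN : (∫ t in (x 0)..(x n), interpDeriv x n u t * biorthFn x n (k+1) t) =
        (u (x (k+1)) - u (x k))/2 + (u (x (k+2)) - u (x (k+1)))/2 := by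
      rw [← intervalIntegral.sum_integral_adjacent_intervals
          (fun j hj => (hNpiece j (Finset.mem_range.mpr hj)).1),
        Finset.sum_congr rfl (fun j hj => (hNpiece j hj).2), hpair]
    have hD : (∫ t in (x 0)..(x n), hatFn x n (k+1) t * biorthFn x n (k+1) t) =
        (x (k+1) - x k)/2 + (x (k+2) - x (k+1))/2 := by
      rw [← intervalIntegral.sum_integral_adjacent_intervals
          (fun j hj => (hDpiece j (Finset.mem_range.mpr hj)).1),
        Finset.sum_congr rfl (fun j hj => (hDpiece j hj).2), hpair]
    have hCA : x k < x (k+2) := hAB.trans hBC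
    have hne : x (k+2) - x k ≠ 0 := sub_ne_zero.mpr hCA.ne'
    show (∫ t in (x 0)..(x n), interpDeriv x n u t * biorthFn x n (k+1) t) /
        (∫ t in (x 0)..(x n), hatFn x n (k+1) t * biorthFn x n (k+1) t) = _
    rw [hN, hD]
    rw [show (x (k+1) - x k)/2 + (x (k+2) - x (k+1))/2 = (x (k+2) - x k)/2 by ring,
      show (u (x (k+1)) - u (x k))/2 + (u (x (k+2)) - u (x (k+1)))/2
        = (u (x (k+2)) - u (x k))/2 by ring,
      show k+1+1 = k+2 by omega, show k+1-1 = k by omega]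
    rw [div_div_div_cancel_right₀ (show (2:ℝ) ≠ 0 by norm_num)]
  · -- i = 0
    have h01 : x 0 < x 1 := hx 0 (by omega)
    have hne : x 1 - x 0 ≠ 0 := sub_ne_zero.mpr h01.ne'
    have hNpiece : ∀ j ∈ Finset.range n,
        IntervalIntegrable (fun t => interpDeriv x n u t * biorthFn x n 0 t)
          volume (x j) (x (j+1)) ∧
        (∫ t in (x j)..(x (j+1)), interpDeriv x n u t * biorthFn x n 0 t) =
          (if j = 0 then (u (x 1) - u (x 0))/2 else 0) := by
      intro j hj
      rw [Finset.mem_range] at hj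
      rcases eq_or_ne j 0 with rfl | hk
      · rw [if_pos rfl]
        obtain ⟨hI, hv⟩ := pieceN_right (D := (u (x 1) - u (x 0))/(x 1 - x 0)) h01
          (f := fun t => interpDeriv x n u t * biorthFn x n 0 t)
          (by intro t ht; beta_reduce; beta_reduce
              rw [interp_on hx u 0 (by omega) t ht, biorth_right 0 (by omega) t ht]; try norm_num)
        exact ⟨hI, hv.trans (by field_simp)⟩
      · rw [if_neg hk]
        exact piece_zero (hx j hj)
          (by intro t ht; beta_reduce; beta_reduce
              rw [biorth_zero hx 0 (by omega) j hj (fun h => absurd h (by omega)) hk t ht,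
                mul_zero])
    have hDpiece : ∀ j ∈ Finset.range n,
        IntervalIntegrable (fun t => hatFn x n 0 t * biorthFn x n 0 t)
          volume (x j) (x (j+1)) ∧
        (∫ t in (x j)..(x (j+1)), hatFn x n 0 t * biorthFn x n 0 t) =
          (if j = 0 then (x 1 - x 0)/2 else 0) := by
      intro j hj
      rw [Finset.mem_range] at hj
      rcases eq_or_ne j 0 with rfl | hk
      · rw [if_pos rfl]
        exact pieceD_right h01
          (f := fun t => hatFn x n 0 t * biorthFn x n 0 t)
          (by intro t ht; beta_reduce; beta_reduce
              rw [hat_right 0 (by omega) t ht, biorth_right 0 (by omega) t ht]; try norm_num)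
      · rw [if_neg hk]
        exact piece_zero (hx j hj)
          (by intro t ht; beta_reduce; beta_reduce
              rw [biorth_zero hx 0 (by omega) j hj (fun h => absurd h (by omega)) hk t ht,
                mul_zero])
    have hsingle : ∀ (v : ℝ),
        (∑ j ∈ Finset.range n, (if j = 0 then v else 0)) = v := by
      intro v
      rw [Finset.sum_ite_eq' (Finset.range n) 0 (fun _ => v),
        if_pos (Finset.mem_range.mpr (by omega))]
    show (∫ t in (x 0)..(x n), interpDeriv x n u t * biorthFn x n 0 t) /
        (∫ t in (x 0)..(x n), hatFn x n 0 t * biorthFn x n 0 t) = _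
    rw [← intervalIntegral.sum_integral_adjacent_intervals
        (fun j hj => (hNpiece j (Finset.mem_range.mpr hj)).1),
      Finset.sum_congr rfl (fun j hj => (hNpiece j hj).2), hsingle,
      ← intervalIntegral.sum_integral_adjacent_intervals
        (fun j hj => (hDpiece j (Finset.mem_range.mpr hj)).1),
      Finset.sum_congr rfl (fun j hj => (hDpiece j hj).2), hsingle,
      div_div_div_cancel_right₀ (show (2:ℝ) ≠ 0 by norm_num)]
  · -- i = n
    obtain ⟨m, rfl⟩ : ∃ m, n = m + 1 := ⟨n - 1, by omega⟩
    have hAB : x m < x (m+1) := hx m (by omega)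
    have hne : x (m+1) - x m ≠ 0 := sub_ne_zero.mpr hAB.ne'
    have hNpiece : ∀ j ∈ Finset.range (m+1),
        IntervalIntegrable (fun t => interpDeriv x (m+1) u t * biorthFn x (m+1) (m+1) t)
          volume (x j) (x (j+1)) ∧
        (∫ t in (x j)..(x (j+1)), interpDeriv x (m+1) u t * biorthFn x (m+1) (m+1) t) =
          (if j = m then (u (x (m+1)) - u (x m))/2 else 0) := by
      intro j hj
      rw [Finset.mem_range] at hj
      rcases eq_or_ne j m with rfl | hk
      · rw [if_pos rfl]
        obtain ⟨hI, hv⟩ := pieceN_left (D := (u (x (j+1)) - u (x j))/(x (j+1) - x j)) hAB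
          (f := fun t => interpDeriv x (j+1) u t * biorthFn x (j+1) (j+1) t)
          (by intro t ht; beta_reduce; beta_reduce
              rw [interp_on hx u j (by omega) t ht, biorth_left (j+1) (by omega) t ht]; try norm_num)
        exact ⟨hI, hv.trans (by field_simp)⟩
      · rw [if_neg hk]
        exact piece_zero (hx j hj)
          (by intro t ht; beta_reduce; beta_reduce
              rw [biorth_zero hx (m+1) (by omega) j hj (fun _ => by omega) (by omega) t ht,
                mul_zero])
    have hDpiece : ∀ j ∈ Finset.range (m+1),
        IntervalIntegrable (fun t => hatFn x (m+1) (m+1) t * biorthFn x (m+1) (m+1) t)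
          volume (x j) (x (j+1)) ∧
        (∫ t in (x j)..(x (j+1)), hatFn x (m+1) (m+1) t * biorthFn x (m+1) (m+1) t) =
          (if j = m then (x (m+1) - x m)/2 else 0) := by
      intro j hj
      rw [Finset.mem_range] at hj
      rcases eq_or_ne j m with rfl | hk
      · rw [if_pos rfl]
        exact pieceD_left hAB
          (f := fun t => hatFn x (j+1) (j+1) t * biorthFn x (j+1) (j+1) t)
          (by intro t ht; beta_reduce; beta_reduce
              rw [hat_left (j+1) (by omega) t ht, biorth_left (j+1) (by omega) t ht]; try norm_num)
      · rw [if_neg hk]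
        exact piece_zero (hx j hj)
          (by intro t ht; beta_reduce; beta_reduce
              rw [biorth_zero hx (m+1) (by omega) j hj (fun _ => by omega) (by omega) t ht,
                mul_zero])
    have hsingle : ∀ (v : ℝ),
        (∑ j ∈ Finset.range (m+1), (if j = m then v else 0)) = v := by
      intro v
      rw [Finset.sum_ite_eq' (Finset.range (m+1)) m (fun _ => v),
        if_pos (Finset.mem_range.mpr (by omega))]
    show (∫ t in (x 0)..(x (m+1)), interpDeriv x (m+1) u t * biorthFn x (m+1) (m+1) t) /
        (∫ t in (x 0)..(x (m+1)), hatFn x (m+1) (m+1) t * biorthFn x (m+1) (m+1) t) = _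
    rw [← intervalIntegral.sum_integral_adjacent_intervals
        (fun j hj => (hNpiece j (Finset.mem_range.mpr hj)).1),
      Finset.sum_congr rfl (fun j hj => (hNpiece j hj).2), hsingle,
      ← intervalIntegral.sum_integral_adjacent_intervals
        (fun j hj => (hDpiece j (Finset.mem_range.mpr hj)).1),
      Finset.sum_congr rfl (fun j hj => (hDpiece j hj).2), hsingle,
      show m+1-1 = m by omega, div_div_div_cancel_right₀ (show (2:ℝ) ≠ 0 by norm_num)]

/-- midpoint error for cubics: for `u(x) = a x³ + b x² + c x + d`
(so `u'(t) = 3 a t² + 2 b t + c`), with `x̃_i = (x_{i-1} + x_{i+1})/2` for interior `i`,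
`x̃_0 = (x_0 + x_1)/2`, `x̃_n = (x_{n-1} + x_n)/2`:
`|g_i - u'(x̃_i)| = (|a|/4)(x_{i+1} - x_{i-1})²` for `1 ≤ i ≤ n-1`,
`|g_0 - u'(x̃_0)| = (|a|/4)(x_1 - x_0)²`, and `|g_n - u'(x̃_n)| = (|a|/4)(x_n - x_{n-1})²`. -/
theorem recGrad_cubic_midpoint_error (n : ℕ) (x : ℕ → ℝ) (hn : 2 ≤ n)
    (hx : ∀ i < n, x i < x (i+1)) (a b c d : ℝ) :
    (∀ i : ℕ, 1 ≤ i → i < n →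
      |recGrad x n (fun t => a * t^3 + b * t^2 + c * t + d) i
          - (3 * a * ((x (i-1) + x (i+1)) / 2)^2 + 2 * b * ((x (i-1) + x (i+1)) / 2) + c)|
        = (|a| / 4) * (x (i+1) - x (i-1))^2) ∧
    |recGrad x n (fun t => a * t^3 + b * t^2 + c * t + d) 0
        - (3 * a * ((x 0 + x 1) / 2)^2 + 2 * b * ((x 0 + x 1) / 2) + c)|
      = (|a| / 4) * (x 1 - x 0)^2 ∧
    |recGrad x n (fun t => a * t^3 + b * t^2 + c * t + d) n
        - (3 * a * ((x (n-1) + x n) / 2)^2 + 2 * b * ((x (n-1) + x n) / 2) + c)|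
      = (|a| / 4) * (x n - x (n-1))^2 := by

  set u : ℝ → ℝ := fun t => a * t^3 + b * t^2 + c * t + d with hu
  obtain ⟨hint, h0, hn'⟩ := recGrad_eq n x hn hx u
  have key : ∀ A C : ℝ, A < C →
      |(u C - u A)/(C - A) - (3*a*((A+C)/2)^2 + 2*b*((A+C)/2) + c)| = |a|/4*(C-A)^2 := by
    intro A C h
    have hne : C - A ≠ 0 := sub_ne_zero.mpr h.ne'
    have heq : (u C - u A)/(C - A) - (3*a*((A+C)/2)^2 + 2*b*((A+C)/2) + c)
        = a * (C-A)^2 / 4 := by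
      simp only [hu]
      field_simp
      ring
    rw [heq, abs_div, abs_mul, abs_of_nonneg (sq_nonneg (C - A)),
      show |(4:ℝ)| = 4 from abs_of_pos (by norm_num)]
    ring
  refine ⟨?_, ?_, ?_⟩
  · intro i hi1 hi2
    have hlt : x (i-1) < x (i+1) :=
      (hx (i-1) (by omega)).trans_le (by
        rw [show i - 1 + 1 = i by omega]
        exact (hx i hi2).le)
    rw [hint i hi1 hi2]
    exact key _ _ hlt
  · rw [h0]
    exact key _ _ (hx 0 (by omega))
  · rw [hn']
    have hlt : x (n-1) < x n := by
      have := hx (n-1) (by omega)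
      rwa [show n - 1 + 1 = n by omega] at this
    exact key _ _ hlt
end
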